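/- Let f be analytic on 𝔻 with f(0) = 0 and f'(0) = 1, and suppose there exists an analytic ω : 𝔻 → ℂ with ω(0) = 0 and |ω(z)| ≤ |z| on 𝔻 such that z·f'(z) = f(z)·exp(ω(z)) for all z ∈ 𝔻 (i.e. f ∈ S*_e, zf'/f subordinate to e^z). Then for every z with 0 < |z| < log(1 + arcsinh(1)) (Real.log, arcsinh(1) = Real.arsinh 1), one has f(z) ≠ 0 and z·f'(z)/f(z) ∈ Ω_ρ. -/

import Mathlib

open Complex Topology Filter

/-- Principal branch of the complex inverse hyperbolic sine. -/
noncomputable def carcsinh (z : ℂ) : ℂ := Complex.log (z + (1 + z ^ 2) ^ ((1 : ℂ) / 2))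

/-- The function `ρ(z) = 1 + arcsinh z`. -/
noncomputable def ρ (z : ℂ) : ℂ := 1 + carcsinh z

/-- The open unit disk in `ℂ`. -/
def unitDisk : Set ℂ := {z : ℂ | ‖z‖ < 1}

/-- The petal-shaped domain `Ω_ρ = ρ '' 𝔻`. -/
noncomputable def OmegaRho : Set ℂ := ρ '' unitDisk


lemma hasSum_cexp (z : ℂ) : HasSum (fun n : ℕ => z ^ n / (n.factorial : ℂ)) (Complex.exp z) := by
  rw [Complex.exp_eq_exp_ℂ]
  exact NormedSpace.expSeries_div_hasSum_exp z

lemma hasSum_rexp (x : ℝ) : HasSum (fun n : ℕ => x ^ n / (n.factorial : ℝ)) (Real.exp x) := by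
  rw [Real.exp_eq_exp_ℝ]
  exact NormedSpace.expSeries_div_hasSum_exp x

lemma abs_cexp_sub_one_le (z : ℂ) :
    ‖Complex.exp z - 1‖ ≤ Real.exp (‖z‖) - 1 := by
  have hc : HasSum (fun n : ℕ => z ^ n / (n.factorial : ℂ) - if n = 0 then 1 else 0)
      (Complex.exp z - 1) := by
    simpa using (hasSum_cexp z).sub (hasSum_ite_eq (0 : ℕ) (1 : ℂ))
  have hr : HasSum (fun n : ℕ => (‖z‖) ^ n / (n.factorial : ℝ) - if n = 0 then 1 else 0)
      (Real.exp (‖z‖) - 1) := by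
    simpa using (hasSum_rexp (‖z‖)).sub (hasSum_ite_eq (0 : ℕ) (1 : ℝ))
  rw [show ‖Complex.exp z - 1‖ = ‖Complex.exp z - 1‖ from rfl, ← hc.tsum_eq]
  refine tsum_of_norm_bounded hr fun n => ?_
  rcases Nat.eq_zero_or_pos n with h0 | h0
  · simp [h0]
  · have : n ≠ 0 := h0.ne'
    simp only [this, if_false, sub_zero]
    rw [norm_div, norm_pow, Complex.norm_natCast]

lemma hasSum_csinh (z : ℂ) :
    HasSum (fun n : ℕ => (z ^ n / (n.factorial : ℂ) - (-z) ^ n / (n.factorial : ℂ)) / 2)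
      (Complex.sinh z) := by
  have := ((hasSum_cexp z).sub (hasSum_cexp (-z))).div_const 2
  simpa [Complex.sinh] using this

lemma hasSum_rsinh (x : ℝ) :
    HasSum (fun n : ℕ => (x ^ n / (n.factorial : ℝ) - (-x) ^ n / (n.factorial : ℝ)) / 2)
      (Real.sinh x) := by
  have := ((hasSum_rexp x).sub (hasSum_rexp (-x))).div_const 2
  simpa [Real.sinh_eq] using this

lemma abs_csinh_le (z : ℂ) : ‖Complex.sinh z‖ ≤ Real.sinh (‖z‖) := by
  rw [show ‖Complex.sinh z‖ = ‖Complex.sinh z‖ from rfl,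
    ← (hasSum_csinh z).tsum_eq]
  refine tsum_of_norm_bounded (hasSum_rsinh (‖z‖)) fun n => ?_
  rcases Nat.even_or_odd n with he | ho
  · rw [he.neg_pow, he.neg_pow]
    simp
  · rw [ho.neg_pow, ho.neg_pow]
    have h1 : (z ^ n / (n.factorial : ℂ) - -z ^ n / (n.factorial : ℂ)) / 2
        = z ^ n / (n.factorial : ℂ) := by ring
    have h2 : ((‖z‖) ^ n / (n.factorial : ℝ) - -(‖z‖) ^ n / (n.factorial : ℝ)) / 2
        = (‖z‖) ^ n / (n.factorial : ℝ) := by ring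
    rw [h1, h2, norm_div, norm_pow, Complex.norm_natCast]

lemma hasSum_ccosh (z : ℂ) :
    HasSum (fun n : ℕ => (z ^ n / (n.factorial : ℂ) + (-z) ^ n / (n.factorial : ℂ)) / 2
        - if n = 0 then 1 else 0)
      (Complex.cosh z - 1) := by
  have := (((hasSum_cexp z).add (hasSum_cexp (-z))).div_const 2).sub
    (hasSum_ite_eq (0 : ℕ) (1 : ℂ))
  simpa [Complex.cosh] using this

lemma hasSum_rcosh (x : ℝ) :
    HasSum (fun n : ℕ => (x ^ n / (n.factorial : ℝ) + (-x) ^ n / (n.factorial : ℝ)) / 2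
        - if n = 0 then 1 else 0)
      (Real.cosh x - 1) := by
  have := (((hasSum_rexp x).add (hasSum_rexp (-x))).div_const 2).sub
    (hasSum_ite_eq (0 : ℕ) (1 : ℝ))
  simpa [Real.cosh_eq] using this

lemma abs_ccosh_sub_one_le (z : ℂ) :
    ‖Complex.cosh z - 1‖ ≤ Real.cosh (‖z‖) - 1 := by
  rw [show ‖Complex.cosh z - 1‖ = ‖Complex.cosh z - 1‖ from rfl,
    ← (hasSum_ccosh z).tsum_eq]
  refine tsum_of_norm_bounded (hasSum_rcosh (‖z‖)) fun n => ?_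
  rcases Nat.eq_zero_or_pos n with h0 | h0
  · simp [h0]
  · have hn : n ≠ 0 := h0.ne'
    simp only [hn, if_false, sub_zero]
    rcases Nat.even_or_odd n with he | ho
    · rw [he.neg_pow, he.neg_pow]
      have h1 : (z ^ n / (n.factorial : ℂ) + z ^ n / (n.factorial : ℂ)) / 2
          = z ^ n / (n.factorial : ℂ) := by ring
      have h2 : ((‖z‖) ^ n / (n.factorial : ℝ) + (‖z‖) ^ n / (n.factorial : ℝ)) / 2
          = (‖z‖) ^ n / (n.factorial : ℝ) := by ring
      rw [h1, h2, norm_div, norm_pow, Complex.norm_natCast]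
    · rw [ho.neg_pow, ho.neg_pow]
      have h1 : (z ^ n / (n.factorial : ℂ) + -z ^ n / (n.factorial : ℂ)) / 2 = 0 := by ring
      have h2 : ((‖z‖) ^ n / (n.factorial : ℝ) + -(‖z‖) ^ n / (n.factorial : ℝ)) / 2 = 0 := by ring
      rw [h1, h2]
      simp


lemma arsinh_one_lt_one : Real.arsinh 1 < 1 := by
  have h : Real.sinh (Real.arsinh 1) < Real.sinh 1 := by
    rw [Real.sinh_arsinh]
    exact Real.self_lt_sinh_iff.mpr one_pos
  exact Real.sinh_lt_sinh.mp h

lemma cpow_half_sq {w : ℂ} (hw : 0 < w.re) : (w ^ 2) ^ ((1 : ℂ) / 2) = w := by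
  have hw0 : w ≠ 0 := by
    intro h; rw [h] at hw; simp at hw
  have harg : Complex.arg w + Complex.arg w ∈ Set.Ioc (-Real.pi) Real.pi := by
    have := Complex.abs_arg_lt_pi_div_two_iff.mpr (Or.inl hw)
    rw [abs_lt] at this
    constructor <;> [nlinarith [this.1]; nlinarith [this.2]]
  have hlog : Complex.log (w ^ 2) = Complex.log w + Complex.log w := by
    rw [sq]; exact Complex.log_mul hw0 hw0 harg
  rw [Complex.cpow_def_of_ne_zero (pow_ne_zero 2 hw0), hlog]
  rw [show (Complex.log w + Complex.log w) * (1 / 2) = Complex.log w by ring]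
  exact Complex.exp_log hw0

lemma carcsinh_sinh {u : ℂ} (hu : ‖u‖ < Real.arsinh 1) :
    carcsinh (Complex.sinh u) = u := by
  have hu1 : ‖u‖ < 1 := hu.trans arsinh_one_lt_one
  -- Re (cosh u) > 0
  have hcosh : 0 < (Complex.cosh u).re := by
    have h1 : ‖Complex.cosh u - 1‖ ≤ Real.cosh (‖u‖) - 1 :=
      abs_ccosh_sub_one_le u
    have h2 : Real.cosh (‖u‖) < Real.cosh (Real.arsinh 1) := by
      apply Real.cosh_lt_cosh.mpr
      rwa [_root_.abs_of_nonneg (norm_nonneg u), _root_.abs_of_nonneg (Real.arsinh_nonneg_iff.mpr one_pos.le)]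
    have h3 : Real.cosh (Real.arsinh 1) = Real.sqrt 2 := by
      rw [Real.cosh_arsinh]; norm_num
    have h4 : Real.sqrt 2 < 2 := by
      nlinarith [Real.sq_sqrt (by norm_num : (2:ℝ) ≥ 0), Real.sqrt_nonneg 2]
    have h5 : |(Complex.cosh u - 1).re| ≤ ‖Complex.cosh u - 1‖ :=
      Complex.abs_re_le_norm _
    have : (Complex.cosh u - 1).re = (Complex.cosh u).re - 1 := by simp
    rw [this] at h5
    cases' abs_le.mp h5 with h5a _
    linarith
  have hsq : 1 + Complex.sinh u ^ 2 = Complex.cosh u ^ 2 := by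
    have := Complex.cosh_sq_sub_sinh_sq u
    linear_combination -this
  have hroot : (1 + Complex.sinh u ^ 2) ^ ((1 : ℂ) / 2) = Complex.cosh u := by
    rw [hsq]; exact cpow_half_sq hcosh
  rw [carcsinh, hroot, Complex.sinh_add_cosh]
  have him : |u.im| < 1 := (Complex.abs_im_le_norm u).trans_lt hu1
  have hpi : 1 < Real.pi := by linarith [Real.pi_gt_three]
  rw [abs_lt] at him
  apply Complex.log_exp <;> [linarith [him.1]; linarith [him.2]]

lemma exp_mem_OmegaRho {ζ : ℂ} (hζ : ‖ζ‖ < Real.log (1 + Real.arsinh 1)) :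
    Complex.exp ζ ∈ OmegaRho := by
  set u : ℂ := Complex.exp ζ - 1 with hu_def
  have hpos : (0:ℝ) < 1 + Real.arsinh 1 := by linarith [Real.arsinh_nonneg_iff.mpr one_pos.le]
  have hu : ‖u‖ < Real.arsinh 1 := by
    calc ‖u‖ ≤ Real.exp (‖ζ‖) - 1 := abs_cexp_sub_one_le ζ
    _ < Real.exp (Real.log (1 + Real.arsinh 1)) - 1 := by
        have := Real.exp_lt_exp.mpr hζ; linarith
    _ = Real.arsinh 1 := by rw [Real.exp_log hpos]; ring
  refine ⟨Complex.sinh u, ?_, ?_⟩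
  · show ‖Complex.sinh u‖ < 1
    calc ‖Complex.sinh u‖ ≤ Real.sinh (‖u‖) := abs_csinh_le u
    _ < Real.sinh (Real.arsinh 1) := Real.sinh_lt_sinh.mpr hu
    _ = 1 := Real.sinh_arsinh 1
  · rw [ρ, carcsinh_sinh hu]
    simp [hu_def]

lemma unitDisk_eq_ball : unitDisk = Metric.ball (0:ℂ) 1 := by
  ext w; simp [unitDisk, Metric.mem_ball, Complex.dist_eq]

lemma f_ne_zero (f ω : ℂ → ℂ) (hf : AnalyticOnNhd ℂ f unitDisk) (hf1 : deriv f 0 = 1)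
    (hωc : AnalyticOnNhd ℂ ω unitDisk)
    (hsub : ∀ z ∈ unitDisk, z * deriv f z = f z * Complex.exp (ω z))
    {z : ℂ} (hz : z ∈ unitDisk) (hz0 : z ≠ 0) : f z ≠ 0 := by
  have hopen : IsOpen unitDisk := unitDisk_eq_ball ▸ Metric.isOpen_ball
  have hprec : IsPreconnected unitDisk :=
    unitDisk_eq_ball ▸ (convex_ball (0:ℂ) 1).isPreconnected
  have h0mem : (0:ℂ) ∈ unitDisk := by simp [unitDisk]
  intro hfz
  -- f is not eventually zero near z
  have hnot : ¬ ∀ᶠ w in 𝓝 z, f w = 0 := by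
    intro hev
    have heq : Set.EqOn f 0 unitDisk :=
      hf.eqOn_zero_of_preconnected_of_eventuallyEq_zero hprec hz hev
    have h0 : f =ᶠ[𝓝 (0:ℂ)] 0 :=
      Filter.eventuallyEq_of_mem (hopen.mem_nhds h0mem) heq
    have : deriv f 0 = deriv (0 : ℂ → ℂ) 0 := h0.deriv_eq
    rw [hf1, show (0 : ℂ → ℂ) = fun _ => (0:ℂ) from rfl, deriv_const] at this
    exact one_ne_zero this
  have hfa : AnalyticAt ℂ f z := hf z hz
  have ho : analyticOrderAt f z ≠ ⊤ := fun h => hnot (analyticOrderAt_eq_top.mp h)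
  obtain ⟨n, hn⟩ := WithTop.ne_top_iff_exists.mp ho
  obtain ⟨g, hg, hg0, hfeq⟩ := hfa.analyticOrderAt_eq_natCast.mp hn.symm
  -- n ≠ 0
  rcases n with _ | m
  · have := hfeq.self_of_nhds
    simp only [pow_zero, one_smul] at this
    exact hg0 (this ▸ hfz)
  -- the factorization, with smul as mul
  have E1 : ∀ᶠ w in 𝓝 z, f w = (w - z) ^ (m + 1) * g w := by
    filter_upwards [hfeq] with w hw
    simpa [smul_eq_mul] using hw
  have E2 : ∀ᶠ w in 𝓝 z, AnalyticAt ℂ g w := hg.eventually_analyticAt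
  have E3 : ∀ᶠ w in 𝓝 z, w ∈ unitDisk := hopen.eventually_mem hz
  have E4 : deriv f =ᶠ[𝓝 z] deriv (fun w => (w - z) ^ (m + 1) * g w) :=
    Filter.EventuallyEq.deriv E1
  have hd : ∀ w, AnalyticAt ℂ g w →
      deriv (fun w => (w - z) ^ (m + 1) * g w) w
        = ((m : ℂ) + 1) * (w - z) ^ m * g w + (w - z) ^ (m + 1) * deriv g w := by
    intro w hw
    have h1 : HasDerivAt (fun w => (w - z) ^ (m + 1)) (((m : ℂ) + 1) * (w - z) ^ m) w := by
      have := ((hasDerivAt_id w).sub_const z).fun_pow (m + 1)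
      simpa using this
    have h2 : HasDerivAt g (deriv g w) w := hw.differentiableAt.hasDerivAt
    exact (h1.mul h2).deriv
  set F : ℂ → ℂ := fun w =>
    w * (((m : ℂ) + 1) * g w + (w - z) * deriv g w) - (w - z) * g w * Complex.exp (ω w)
    with hF_def
  have hgd : AnalyticAt ℂ (deriv g) z :=
    (AnalyticOnNhd.deriv (fun w (hw : AnalyticAt ℂ g w) => hw)) z hg
  have hFcont : ContinuousAt F z := by
    have hg' := hg.continuousAt
    have hgd' := hgd.continuousAt
    have hω' := (hωc z hz).continuousAt
    exact (continuousAt_id.mul ((continuousAt_const.mul hg').add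
        ((continuousAt_id.sub continuousAt_const).mul hgd'))).sub
      (((continuousAt_id.sub continuousAt_const).mul hg').mul
        (Complex.continuous_exp.continuousAt.comp hω'))
  have hev : ∀ᶠ w in 𝓝[≠] z, F w = 0 := by
    filter_upwards [E1.filter_mono nhdsWithin_le_nhds, E2.filter_mono nhdsWithin_le_nhds,
      E3.filter_mono nhdsWithin_le_nhds, E4.filter_mono nhdsWithin_le_nhds,
      self_mem_nhdsWithin] with w h1 h2 h3 h4 hne
    have hne' : w ≠ z := hne
    have heq := hsub w h3
    rw [h1, h4, hd w h2] at heq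
    have hzw : w - z ≠ 0 := sub_ne_zero.mpr hne'
    have key : (w - z) ^ m * F w = 0 := by
      simp only [hF_def]
      linear_combination heq
    rcases mul_eq_zero.mp key with h | h
    · exact absurd h (pow_ne_zero m hzw)
    · exact h
  have hF0 : Filter.Tendsto F (𝓝[≠] z) (𝓝 0) := by
    refine Filter.Tendsto.congr' ?_ tendsto_const_nhds
    filter_upwards [hev] with w hw using hw.symm
  have hFz : Filter.Tendsto F (𝓝[≠] z) (𝓝 (F z)) :=
    hFcont.tendsto.mono_left nhdsWithin_le_nhds
  have hFzero : F z = 0 := tendsto_nhds_unique hFz hF0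
  have : F z = z * (((m : ℂ) + 1) * g z) := by simp [hF_def]
  rw [this] at hFzero
  rcases mul_eq_zero.mp hFzero with h | h
  · exact hz0 h
  · rcases mul_eq_zero.mp h with h' | h'
    · exact (Nat.cast_add_one_ne_zero m) h'
    · exact hg0 h'

/-- `S*_ρ`-radius for the class `S*_e` (where `z f'(z)/f(z)` is subordinate to `e^z`):
for `0 < |z| < log (1 + arcsinh 1)`, one has `f z ≠ 0` and `z f'(z)/f(z) ∈ Ω_ρ`. -/
theorem radius_Se (f : ℂ → ℂ) (hf : AnalyticOnNhd ℂ f unitDisk)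
    (hf0 : f 0 = 0) (hf1 : deriv f 0 = 1)
    (ω : ℂ → ℂ) (hω : AnalyticOnNhd ℂ ω unitDisk) (hω0 : ω 0 = 0)
    (hωb : ∀ z ∈ unitDisk, ‖ω z‖ ≤ ‖z‖)
    (hsub : ∀ z ∈ unitDisk, z * deriv f z = f z * Complex.exp (ω z)) :
    ∀ z : ℂ, 0 < ‖z‖ →
      ‖z‖ < Real.log (1 + Real.arsinh 1) →
      f z ≠ 0 ∧ z * deriv f z / f z ∈ OmegaRho := by
  intro z hz0 hzR
  have hz_ne : z ≠ 0 := by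
    intro h; rw [h] at hz0; simp at hz0
  have hpos : (0:ℝ) < 1 + Real.arsinh 1 := by
    linarith [Real.arsinh_nonneg_iff.mpr (one_pos.le : (0:ℝ) ≤ 1)]
  have hR1 : Real.log (1 + Real.arsinh 1) < 1 := by
    rw [Real.log_lt_iff_lt_exp hpos]
    have h1 := arsinh_one_lt_one
    have h2 : (2:ℝ) < Real.exp 1 := by
      have := Real.add_one_lt_exp (one_ne_zero (α := ℝ)); linarith
    linarith
  have hz : z ∈ unitDisk := by
    show ‖z‖ < 1; linarith
  have hfz := f_ne_zero f ω hf hf1 hω hsub hz hz_ne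
  refine ⟨hfz, ?_⟩
  have heq : z * deriv f z / f z = Complex.exp (ω z) := by
    rw [hsub z hz]; field_simp
  rw [heq]
  exact exp_mem_OmegaRho (lt_of_le_of_lt (hωb z hz) hzR)
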